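/- For any unit vector u ∈ ℝ³ and θ ∈ ℝ, the matrix exponential exp(θ u^×) equals I₃ + sin(θ) u^× + (1 - cos(θ)) u^× u^×. -/

import Mathlib

open Matrix Real

noncomputable section

attribute [local instance] Matrix.frobeniusNormedAddCommGroup Matrix.frobeniusNormedRing
  Matrix.frobeniusNormedAlgebra

/-- Skew-symmetric matrix associated with the cross product. -/
def skew (w : Fin 3 → ℝ) : Matrix (Fin 3) (Fin 3) ℝ :=
  !![0, -w 2, w 1; w 2, 0, -w 0; -w 1, w 0, 0]

/-- The matrix exponential of θ u^× equals Rodrigues' formula. -/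
theorem exp_skew_eq_rodrigues (θ : ℝ) (u : EuclideanSpace ℝ (Fin 3)) (hu : ‖u‖ = 1) :
    NormedSpace.exp (θ • skew u) =
      1 + Real.sin θ • skew u + (1 - Real.cos θ) • (skew u * skew u) := by
  set K := skew u with hK
  have h1 : u 0 ^ 2 + u 1 ^ 2 + u 2 ^ 2 = 1 := by
    have h := hu
    rw [EuclideanSpace.norm_eq] at h
    have h2 := congrArg (· ^ 2) h
    simp only [Fin.sum_univ_three, Real.norm_eq_abs, sq_abs, one_pow] at h2
    rwa [Real.sq_sqrt (by positivity)] at h2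
  have hK3 : K * K * K = -K := by
    ext i j
    fin_cases i <;> fin_cases j <;>
      simp [hK, skew, Matrix.mul_apply, Fin.sum_univ_three] <;> first
        | ring1
        | linear_combination u 0 * h1
        | linear_combination -u 0 * h1
        | linear_combination u 1 * h1
        | linear_combination -u 1 * h1
        | linear_combination u 2 * h1
        | linear_combination -u 2 * h1
  set E : ℝ → Matrix (Fin 3) (Fin 3) ℝ := fun t => NormedSpace.exp (t • (-K)) with hE
  set R : ℝ → Matrix (Fin 3) (Fin 3) ℝ :=
    fun t => 1 + Real.sin t • K + (1 - Real.cos t) • (K * K) with hR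
  have hEK : ∀ t : ℝ, Commute (E t) K := fun t =>
    (((Commute.refl K).neg_left).smul_left t).exp_left
  have hKR : ∀ t : ℝ, K * R t = Real.cos t • K + Real.sin t • (K * K) := by
    intro t
    have h3 : K * (K * K) = -K := by rw [← mul_assoc, hK3]
    simp only [hR, mul_add, mul_one, Matrix.mul_smul, h3]
    module
  have hder : ∀ t : ℝ, HasDerivAt (fun s => E s * R s) 0 t := by
    intro t
    have h1' : HasDerivAt E (-K * E t) t := hasDerivAt_exp_smul_const' (-K) t
    have h2' : HasDerivAt R (Real.cos t • K + Real.sin t • (K * K)) t := by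
      have hs : HasDerivAt (fun s => Real.sin s • K) (Real.cos t • K) t :=
        (Real.hasDerivAt_sin t).smul_const K
      have hc : HasDerivAt (fun s => (1 - Real.cos s) • (K * K)) (Real.sin t • (K * K)) t := by
        have := ((hasDerivAt_const t (1 : ℝ)).sub (Real.hasDerivAt_cos t)).smul_const (K * K)
        simp at this
        exact this
      have h := ((hasDerivAt_const t (1 : Matrix (Fin 3) (Fin 3) ℝ)).add hs).add hc
      simp at h
      exact h
    have hmul : HasDerivAt (fun s => E s * R s)
        (-K * E t * R t + E t * (Real.cos t • K + Real.sin t • (K * K))) t := h1'.mul h2'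
    convert hmul using 1
    rw [← hKR t, neg_mul, neg_mul, ← (hEK t).eq, mul_assoc]
    abel
  have hconst : ∀ t : ℝ, E t * R t = 1 := by
    have hdiff : Differentiable ℝ (fun s => E s * R s) := fun t => (hder t).differentiableAt
    have hzero : ∀ t : ℝ, deriv (fun s => E s * R s) t = 0 := fun t => (hder t).deriv
    intro t
    have := is_const_of_deriv_eq_zero hdiff hzero t 0
    rw [this]
    simp [hE, hR, NormedSpace.exp_zero]
  have hinv : NormedSpace.exp (θ • K) * E θ = 1 := by
    rw [hE]
    beta_reduce
    rw [show NormedSpace.exp (θ • K) * NormedSpace.exp (θ • -K) = NormedSpace.exp (θ • K + θ • -K) from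
      (NormedSpace.exp_add_of_commute (((Commute.refl K).neg_right).smul_left θ |>.smul_right θ)).symm]
    rw [show θ • K + θ • (-K) = 0 by rw [smul_neg]; exact add_neg_cancel _]
    exact NormedSpace.exp_zero
  calc NormedSpace.exp (θ • K) = NormedSpace.exp (θ • K) * (E θ * R θ) := by
        rw [hconst θ, mul_one]
    _ = (NormedSpace.exp (θ • K) * E θ) * R θ := by rw [mul_assoc]
    _ = R θ := by rw [hinv, one_mul]
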